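/- Let R be a commutative Noetherian ring, M an R-module, and N a finitely generated R-module. Then M ⊗_R N = 0 if and only if M = ann_R(N)·M. Consequently, Supp_R(M ⊗_R N) = Supp_R(M / ann_R(N)·M). -/

import Mathlib

universe u
open TensorProduct

lemma aux_easy {R : Type u} [CommRing R] {M N : Type u} [AddCommGroup M] [Module R M]
    [AddCommGroup N] [Module R N]
    (h : (Module.annihilator R N) • (⊤ : Submodule R M) = ⊤) :
    Subsingleton (M ⊗[R] N) := by
  have key : ∀ n : N, ∀ m ∈ (Module.annihilator R N) • (⊤ : Submodule R M),
      (m ⊗ₜ[R] n : M ⊗[R] N) = 0 := by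
    intro n m hm
    refine Submodule.smul_induction_on hm (fun a ha x _ => ?_) (fun x y hx hy => ?_)
    · rw [smul_tmul, Module.mem_annihilator.mp ha n, tmul_zero]
    · rw [add_tmul, hx, hy, add_zero]
  refine subsingleton_iff_forall_eq 0 |>.mpr fun z => ?_
  induction z with
  | zero => rfl
  | add x y hx hy => rw [hx, hy, add_zero]
  | tmul m n => exact key n m (by rw [h]; trivial)

-- every f.g. module supported at p has an element that is "non-torsion mod pN"
lemma aux_nontorsion {R : Type u} [CommRing R] (N : Type u) [AddCommGroup N] [Module R N]
    [Module.Finite R N] (p : Ideal R) [p.IsPrime] (hp : Module.annihilator R N ≤ p) :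
    ∃ n : N, ∀ s ∉ p, s • n ∉ p • (⊤ : Submodule R N) := by
  by_contra hcon
  push_neg at hcon
  -- choose for each generator
  obtain ⟨gens, hgens⟩ := Module.Finite.fg_top (R := R) (M := N)
  choose sf hsf hsf' using hcon
  set s : R := ∏ i ∈ gens, sf i with hs
  have hsnp : s ∉ p := fun h => by
    obtain ⟨i, _, hi⟩ := Ideal.IsPrime.prod_mem_iff.mp h
    exact hsf i hi
  have hrange : LinearMap.range (s • (LinearMap.id : N →ₗ[R] N)) ≤ p • ⊤ := by
    rintro _ ⟨n, rfl⟩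
    have hn : n ∈ Submodule.span R (gens : Set N) := hgens ▸ Submodule.mem_top
    simp only [LinearMap.smul_apply, LinearMap.id_apply]
    induction hn using Submodule.span_induction with
    | mem x hx =>
      obtain ⟨t, ht⟩ := Finset.dvd_prod_of_mem sf hx
      rw [← hs] at ht
      rw [ht, mul_comm, mul_smul]
      exact Submodule.smul_mem _ t (hsf' x)
    | zero => rw [smul_zero]; exact Submodule.zero_mem _
    | add x y _ _ hx hy => rw [smul_add]; exact Submodule.add_mem _ hx hy
    | smul r x _ hx => rw [smul_comm]; exact Submodule.smul_mem _ r hx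
  obtain ⟨P, hmonic, -, hcoeff, heval⟩ :=
    LinearMap.exists_monic_and_coeff_mem_pow_and_aeval_eq_zero_of_range_le_smul R
      (s • (LinearMap.id : N →ₗ[R] N)) p hrange
  -- aeval of s • id is (P.eval s) • id
  have hsmul : s • (LinearMap.id : N →ₗ[R] N) = algebraMap R (Module.End R N) s := by
    ext n; simp [Module.algebraMap_end_apply]
  rw [hsmul, Polynomial.aeval_algebraMap_apply] at heval
  have hann : P.eval s ∈ Module.annihilator R N := by
    rw [Module.mem_annihilator]
    intro n
    have := congrArg (fun f => f n) heval
    simpa [Module.algebraMap_end_apply] using this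
  have hPs : P.eval s ∈ p := hp hann
  -- P.eval s = s ^ natDegree + lower terms, all lower coeffs in p
  have hlow : P.eval s - s ^ P.natDegree ∈ p := by
    have hexp : P.eval s = ∑ k ∈ Finset.range (P.natDegree + 1), P.coeff k * s ^ k :=
      Polynomial.eval_eq_sum_range' (Nat.lt_succ_self P.natDegree) s
    rw [hexp, Finset.sum_range_succ, Polynomial.Monic.coeff_natDegree hmonic, one_mul,
      add_sub_cancel_right]
    refine Ideal.sum_mem _ fun k hk => ?_
    rw [Finset.mem_range] at hk
    refine Ideal.mul_mem_right _ _ ?_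
    exact (Ideal.pow_le_self (by omega)) (hcoeff k)
  have : s ^ P.natDegree ∈ p := by
    have := p.sub_mem hPs hlow
    simpa using this
  exact hsnp (‹Ideal.IsPrime p›.mem_of_pow_mem _ this)

-- a f.g. module over a domain with a non-torsion element admits a functional not vanishing there
lemma aux_hom_to_ring {T : Type u} [CommRing T] [IsDomain T] (N₁ : Type u) [AddCommGroup N₁]
    [Module T N₁] [Module.Finite T N₁] (n : N₁) (hn : ∀ t : T, t ≠ 0 → t • n ≠ 0) :
    ∃ ψ : N₁ →ₗ[T] T, ψ n ≠ 0 := by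
  classical
  let F := FractionRing T
  -- the base change to the fraction field
  let θ : N₁ →ₗ[T] F ⊗[T] N₁ := TensorProduct.mk T F N₁ 1
  have hbc : IsBaseChange F (LocalizedModule.mkLinearMap (nonZeroDivisors T) N₁) :=
    IsLocalizedModule.isBaseChange (nonZeroDivisors T) F _
  -- image of n is nonzero in the base change
  have hv0 : θ n ≠ 0 := by
    intro h
    have : hbc.equiv (θ n) = LocalizedModule.mkLinearMap (nonZeroDivisors T) N₁ n := by
      simp only [θ, TensorProduct.mk_apply]
      rw [IsBaseChange.equiv_tmul, one_smul]
    rw [h, map_zero] at this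
    obtain ⟨s, hs⟩ := (IsLocalizedModule.eq_zero_iff (nonZeroDivisors T)
      (LocalizedModule.mkLinearMap (nonZeroDivisors T) N₁)).mp this.symm
    exact hn s (nonZeroDivisors.ne_zero s.2) hs
  -- get a functional on the F-vector space
  obtain ⟨lam, hlam⟩ : ∃ lam : Module.Dual F (F ⊗[T] N₁), lam (θ n) ≠ 0 := by
    by_contra h
    push_neg at h
    exact hv0 ((Module.forall_dual_apply_eq_zero_iff F (θ n)).mp h)
  -- clear denominators
  obtain ⟨gens, hgens⟩ := Module.Finite.fg_top (R := T) (M := N₁)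
  obtain ⟨b, hb⟩ := IsLocalization.exist_integer_multiples_of_finset (nonZeroDivisors T)
    (gens.image (fun g => lam (θ g)))
  set μ : N₁ →ₗ[T] F := (b : T) • ((lam.restrictScalars T).comp θ) with hμ
  have hrange : ∀ x : N₁, μ x ∈ LinearMap.range (Algebra.linearMap T F) := by
    intro x
    have hx : x ∈ Submodule.span T (gens : Set N₁) := hgens ▸ Submodule.mem_top
    induction hx using Submodule.span_induction with
    | mem g hg =>
      obtain ⟨t, ht⟩ := hb (lam (θ g)) (Finset.mem_image_of_mem _ hg)
      exact ⟨t, ht⟩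
    | zero => rw [map_zero]; exact Submodule.zero_mem _
    | add x y _ _ hx hy => rw [map_add]; exact Submodule.add_mem _ hx hy
    | smul t x _ hx => rw [map_smul]; exact Submodule.smul_mem _ t hx
  have hinj : Function.Injective (Algebra.linearMap T F) := IsFractionRing.injective T F
  let e : T ≃ₗ[T] LinearMap.range (Algebra.linearMap T F) :=
    LinearEquiv.ofInjective (Algebra.linearMap T F) hinj
  refine ⟨e.symm.toLinearMap.comp (μ.codRestrict _ hrange), fun h0 => ?_⟩
  have hμn : μ n ≠ 0 := by
    rw [hμ]
    simp only [LinearMap.smul_apply, LinearMap.coe_comp, LinearMap.coe_restrictScalars,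
      Function.comp_apply, Algebra.smul_def]
    refine mul_ne_zero (fun hb0 => ?_) hlam
    exact nonZeroDivisors.ne_zero b.2 (hinj (by simpa using hb0))
  apply hμn
  have : μ.codRestrict _ hrange n = 0 := by
    have := congrArg e h0
    simpa using this
  simpa using congrArg Subtype.val this

lemma aux_hom_quotient {R : Type u} [CommRing R] [IsNoetherianRing R] (N : Type u)
    [AddCommGroup N] [Module R N] [Module.Finite R N] (p : Ideal R) [p.IsPrime]
    (hp : Module.annihilator R N ≤ p) :
    ∃ ψ : N →ₗ[R] (R ⧸ p), ψ ≠ 0 := by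
  obtain ⟨n, hn⟩ := aux_nontorsion N p hp
  let N₁ := N ⧸ (p • (⊤ : Submodule R N))
  let T := R ⧸ p
  have hfin : Module.Finite T N₁ := Module.Finite.of_restrictScalars_finite R T N₁
  have hnt : ∀ t : T, t ≠ 0 → t • (Submodule.Quotient.mk n : N₁) ≠ 0 := by
    intro t ht
    obtain ⟨s, rfl⟩ := Ideal.Quotient.mk_surjective t
    rw [Ne, Ideal.Quotient.eq_zero_iff_mem] at ht
    rw [Module.Quotient.mk_smul_mk, Ne, Submodule.Quotient.mk_eq_zero]
    exact hn s ht
  obtain ⟨ψT, hψT⟩ := aux_hom_to_ring (T := T) N₁ (Submodule.Quotient.mk n) hnt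
  refine ⟨(ψT.restrictScalars R).comp (Submodule.mkQ _), fun h0 => ?_⟩
  apply hψT
  exact congrArg (fun f => f n) h0

lemma key_iff {R : Type u} [CommRing R] [IsNoetherianRing R] (M N : Type u)
    [AddCommGroup M] [Module R M] [AddCommGroup N] [Module R N] [Module.Finite R N] :
    Subsingleton (M ⊗[R] N) ↔ Module.annihilator R N • (⊤ : Submodule R M) = ⊤ := by
  refine ⟨fun h => ?_, aux_easy⟩
  by_contra hne
  set I := Module.annihilator R N with hI
  -- the quotient is nontrivial
  have hnt : Nontrivial (M ⧸ I • (⊤ : Submodule R M)) :=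
    Submodule.Quotient.nontrivial_iff.mpr hne
  obtain ⟨y, hy⟩ := exists_ne (0 : M ⧸ I • (⊤ : Submodule R M))
  obtain ⟨c, hc⟩ := CharacterModule.exists_character_apply_ne_zero_of_ne_zero hy
  obtain ⟨m₀, rfl⟩ := Submodule.Quotient.mk_surjective _ y
  -- the pulled back character
  let χ : CharacterModule M := c.comp (Submodule.mkQ (I • (⊤ : Submodule R M))).toAddMonoidHom
  have hχm₀ : χ m₀ ≠ 0 := hc
  have hχI : χ ∈ Submodule.torsionBySet R (CharacterModule M) (I : Set R) := by
    rw [Submodule.mem_torsionBySet_iff]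
    rintro ⟨a, ha⟩
    ext m
    show χ (a • m) = 0
    have : (a • m : M) ∈ I • (⊤ : Submodule R M) := Submodule.smul_mem_smul ha Submodule.mem_top
    show c (Submodule.Quotient.mk (a • m)) = 0
    rw [(Submodule.Quotient.mk_eq_zero _).mpr this, map_zero]
  set D' := Submodule.torsionBySet R (CharacterModule M) (I : Set R)
  have : Nontrivial D' := nontrivial_of_ne ⟨χ, hχI⟩ 0 (fun h0 => by
    apply hχm₀
    have := congrArg Subtype.val h0
    simp only [Submodule.coe_zero] at this
    rw [this]; rfl)
  obtain ⟨p, hprime, x, hx⟩ := (associatedPrimes.nonempty R D').imp fun _ h => isAssociatedPrime_iff.mp h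
  have hxann : ∀ a : R, a • x = 0 ↔ a ∈ p := by
    intro a
    rw [hx, Submodule.mem_colon_singleton, Submodule.mem_bot]
  have hIp : Module.annihilator R N ≤ p := by
    intro a ha
    rw [← hxann]
    exact Subtype.ext ((Submodule.mem_torsionBySet_iff _ _).mp x.2 ⟨a, ha⟩)
  have hp_ne_top : p ≠ ⊤ := hprime.ne_top
  -- the nonzero map N → R/p
  obtain ⟨ψ, hψ⟩ := aux_hom_quotient N p hIp
  -- the embedding R/p → CharacterModule M
  have hker : p ≤ LinearMap.ker (LinearMap.toSpanSingleton R (CharacterModule M) (x : CharacterModule M)) := by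
    intro a ha
    rw [LinearMap.mem_ker, LinearMap.toSpanSingleton_apply]
    exact congrArg Subtype.val ((hxann a).mpr ha)
  let ι : (R ⧸ p) →ₗ[R] CharacterModule M := Submodule.liftQ p _ hker
  -- φ is nonzero
  obtain ⟨n₀, hn₀⟩ := DFunLike.ne_iff.mp hψ
  have hφ : (ι.comp ψ) n₀ ≠ 0 := by
    obtain ⟨s, hs⟩ := Ideal.Quotient.mk_surjective (ψ n₀)
    have hsp : s ∉ p := by
      intro hsp
      apply hn₀
      rw [← hs, LinearMap.zero_apply, Ideal.Quotient.eq_zero_iff_mem]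
      exact hsp
    intro h0
    apply hsp
    rw [← hxann]
    have : ι (ψ n₀) = s • (x : CharacterModule M) := by
      rw [← hs]
      rfl
    rw [LinearMap.comp_apply, this] at h0
    exact Subtype.ext (by simpa using h0)
  -- but Hom(N, CharacterModule M) is subsingleton
  have h1 : Subsingleton (N ⊗[R] M) := (TensorProduct.comm R N M).toEquiv.subsingleton
  have h2 : Subsingleton (CharacterModule (N ⊗[R] M)) :=
    ⟨fun a b => AddMonoidHom.ext fun z => by rw [Subsingleton.elim z 0]; exact (map_zero a).trans (map_zero b).symm⟩
  have h3 : Subsingleton (N →ₗ[R] CharacterModule M) :=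
    (CharacterModule.homEquiv).toEquiv.subsingleton
  exact hφ (by rw [Subsingleton.elim (ι.comp ψ) 0]; rfl)

lemma aux_ann_quot {R : Type u} [CommRing R] (J : Ideal R) :
    Module.annihilator R (R ⧸ J) = J := by
  ext a
  rw [Module.mem_annihilator]
  constructor
  · intro h
    have h2 := h (Ideal.Quotient.mk J 1)
    have h3 : a • Ideal.Quotient.mk J (1 : R) = Ideal.Quotient.mk J (a * 1) := rfl
    rwa [h3, mul_one, Ideal.Quotient.eq_zero_iff_mem] at h2
  · intro ha m
    obtain ⟨r, rfl⟩ := Ideal.Quotient.mk_surjective m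
    have h3 : a • Ideal.Quotient.mk J r = Ideal.Quotient.mk J (a * r) := rfl
    rw [h3, Ideal.Quotient.eq_zero_iff_mem]
    exact J.mul_mem_right r ha

lemma aux_ann_localized {R : Type u} [CommRing R] (S : Submonoid R) (N : Type u)
    [AddCommGroup N] [Module R N] [Module.Finite R N] :
    Module.annihilator (Localization S) ((Localization S) ⊗[R] N) =
      (Module.annihilator R N).map (algebraMap R (Localization S)) := by
  classical
  set L := Localization S
  let f : N →ₗ[R] L ⊗[R] N := (TensorProduct.mk R L N) 1
  have hloc : IsLocalizedModule S f :=
    (isLocalizedModule_iff_isBaseChange S L f).mpr (TensorProduct.isBaseChange R N L)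
  refine le_antisymm ?_ ?_
  · intro x hx
    obtain ⟨⟨a, s⟩, (hxas : IsLocalization.mk' L a s = x)⟩ := IsLocalization.mk'_surjective S x
    obtain ⟨gens, hgens⟩ := Module.Finite.fg_top (R := R) (M := N)
    -- for each generator, the element a • n dies in the localization
    have key : ∀ n : N, f (a • n) = 0 := by
      intro n
      have h1 : algebraMap R L a ∈ Module.annihilator L (L ⊗[R] N) := by
        rw [← IsLocalization.mk'_spec L a s, hxas]
        exact Ideal.mul_mem_right _ _ hx
      have := Module.mem_annihilator.mp h1 (f n)
      rwa [algebraMap_smul, show (a • f n : L ⊗[R] N) = f (a • n) from (map_smul f a n).symm] at this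
    choose tf htf using fun g : gens => (IsLocalizedModule.eq_zero_iff S f).mp (key g)
    set t : ↥S := ∏ g : gens, tf g with ht
    have hta : (t : R) * a ∈ Module.annihilator R N := by
      rw [Module.mem_annihilator]
      have hker : ∀ n ∈ Submodule.span R (gens : Set N),
          n ∈ LinearMap.ker (LinearMap.lsmul R N ((t : R) * a)) := by
        intro n hn
        refine Submodule.span_le.mpr ?_ hn
        intro g hg
        simp only [SetLike.mem_coe, LinearMap.mem_ker, LinearMap.lsmul_apply]
        obtain ⟨u, hu⟩ := Finset.dvd_prod_of_mem (fun g : gens => (tf g : R))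
          (Finset.mem_univ (⟨g, hg⟩ : gens))
        have hcoe : (t : R) = (tf ⟨g, hg⟩ : R) * u := by
          rw [ht]; push_cast; exact hu
        have htf' : (tf ⟨g, hg⟩ : R) • a • g = 0 := by
          have h5 := htf ⟨g, hg⟩
          rwa [Submonoid.smul_def] at h5
        rw [hcoe, mul_comm ((tf ⟨g, hg⟩ : R)) u, mul_assoc, mul_smul, mul_smul, htf', smul_zero]
      intro n
      have : n ∈ LinearMap.ker (LinearMap.lsmul R N ((t : R) * a)) :=
        hker n (hgens ▸ Submodule.mem_top)
      simpa using this
    -- now rewrite x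
    have hx2 : x = IsLocalization.mk' L (a * (t : R)) (s * t) := by
      rw [IsLocalization.mk'_cancel, hxas]
    rw [hx2, IsLocalization.mk'_eq_mul_mk'_one]
    refine Ideal.mul_mem_right _ _ (Ideal.mem_map_of_mem _ ?_)
    rwa [mul_comm]
  · rw [Ideal.map_le_iff_le_comap]
    intro a ha
    rw [Ideal.mem_comap, Module.mem_annihilator]
    intro z
    rw [algebraMap_smul]
    induction z with
    | zero => rw [smul_zero]
    | add u v hu hv => rw [smul_add, hu, hv, add_zero]
    | tmul c n =>
      rw [← TensorProduct.tmul_smul, Module.mem_annihilator.mp ha n, TensorProduct.tmul_zero]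

lemma aux_nontrivial_loc {R : Type u} [CommRing R] (S : Submonoid R) (X : Type u)
    [AddCommGroup X] [Module R X] :
    Nontrivial (LocalizedModule S X) ↔ Nontrivial (Localization S ⊗[R] X) := by
  have e : Localization S ⊗[R] X ≃ₗ[Localization S] LocalizedModule S X :=
    (IsLocalizedModule.isBaseChange S (Localization S)
      (LocalizedModule.mkLinearMap S X)).equiv
  rw [← not_subsingleton_iff_nontrivial, ← not_subsingleton_iff_nontrivial,
    (Equiv.subsingleton_congr e.toEquiv)]

lemma aux_mem_support_iff {R : Type u} [CommRing R] [IsNoetherianRing R] (M N : Type u)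
    [AddCommGroup M] [Module R M] [AddCommGroup N] [Module R N] [Module.Finite R N]
    (p : PrimeSpectrum R) :
    p ∈ Module.support R (M ⊗[R] N) ↔
      ¬ ((Module.annihilator R N).map
            (algebraMap R (Localization p.asIdeal.primeCompl)) •
          (⊤ : Submodule (Localization p.asIdeal.primeCompl)
            (Localization p.asIdeal.primeCompl ⊗[R] M)) = ⊤) := by
  set S := p.asIdeal.primeCompl
  set L := Localization S
  have hnoeth : IsNoetherianRing L := IsLocalization.isNoetherianRing S L inferInstance
  rw [Module.mem_support_iff, aux_nontrivial_loc S, ← not_subsingleton_iff_nontrivial]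
  have e : L ⊗[R] (M ⊗[R] N) ≃ₗ[L] (L ⊗[R] M) ⊗[L] (L ⊗[R] N) :=
    TensorProduct.AlgebraTensorModule.distribBaseChange R L M N
  rw [Equiv.subsingleton_congr e.toEquiv,
    key_iff (R := L) (L ⊗[R] M) (L ⊗[R] N), aux_ann_localized S N]


/-- For a Noetherian ring `R`, an `R`-module `M` and a finitely generated `R`-module `N`:
`M ⊗_R N = 0` iff `M = ann_R(N)·M`; consequently
`Supp_R(M ⊗_R N) = Supp_R(M / ann_R(N)·M)`. -/
theorem tensor_eq_zero_iff_and_support_eq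
    {R : Type u} [CommRing R] [IsNoetherianRing R]
    (M : Type u) [AddCommGroup M] [Module R M]
    (N : Type u) [AddCommGroup N] [Module R N] [Module.Finite R N] :
    (Subsingleton (TensorProduct R M N) ↔
      (⊤ : Submodule R N).annihilator • (⊤ : Submodule R M) = ⊤) ∧
    Module.support R (TensorProduct R M N) =
      Module.support R (M ⧸ ((⊤ : Submodule R N).annihilator • (⊤ : Submodule R M))) := by
  rw [Submodule.annihilator_top]
  set J := Module.annihilator R N with hJ
  refine ⟨key_iff M N, ?_⟩
  have h1 : Module.support R (M ⊗[R] (R ⧸ J)) =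
      Module.support R (M ⧸ (J • (⊤ : Submodule R M))) :=
    LinearEquiv.support_eq (tensorQuotEquivQuotSMul M J)
  rw [← h1]
  ext p
  rw [aux_mem_support_iff M N p, aux_mem_support_iff M (R ⧸ J) p, aux_ann_quot]
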